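/- The min-sum objective is weight-separable: let (X, d) be a finite set with a distance function d, let k satisfy 1 < k < |X|, and let S ⊆ X with 2 ≤ |S| ≤ k. Then there exists a weight function w on X such that every k-clustering C of X minimizing the min-sum cost with respect to (w[X], d) places all elements of S in pairwise distinct clusters. -/

import Mathlib

open Finset

/-- A weight function assigns a positive real weight to every point. -/
def IsWeight {X : Type*} (w : X → ℝ) : Prop := ∀ x, 0 < w x

/-- A k-clustering: a partition of `X` into `k` pairwise disjoint nonempty parts. -/
def IsClustering {X : Type*} [Fintype X] [DecidableEq X]
    (C : Finset (Finset X)) (k : ℕ) : Prop :=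
  C.card = k ∧ (∀ A ∈ C, A.Nonempty) ∧
  (∀ A ∈ C, ∀ B ∈ C, A ≠ B → Disjoint A B) ∧
  (∀ x : X, ∃ A ∈ C, x ∈ A)

/-- `x ∼_C y`: `x` and `y` lie in the same cluster of `C`. -/
def SameCluster {X : Type*} [DecidableEq X] (C : Finset (Finset X)) (x y : X) : Prop :=
  ∃ A ∈ C, x ∈ A ∧ y ∈ A

/-- The k-means cost of a clustering `C` of weighted data `(w[X], d)`: for each cluster, the
sum over unordered pairs of distinct points of `d(x,y)² w(x) w(y)` (written as half the sum
over ordered pairs of distinct points), divided by the cluster weight. -/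
noncomputable def kmeansCost {X : Type*} [DecidableEq X]
    (C : Finset (Finset X)) (w : X → ℝ) (d : X → X → ℝ) : ℝ :=
  ∑ A ∈ C, ((1 / 2) * ∑ p ∈ A.offDiag, d p.1 p.2 ^ 2 * w p.1 * w p.2) / (∑ x ∈ A, w x)

/-- The min-sum cost of a clustering `C` of weighted data `(w[X], d)`: the sum over clusters
of the sum over unordered pairs of distinct points of `d(x,y) w(x) w(y)`. -/
noncomputable def minSumCost {X : Type*} [DecidableEq X]
    (C : Finset (Finset X)) (w : X → ℝ) (d : X → X → ℝ) : ℝ :=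
  ∑ A ∈ C, (1 / 2) * ∑ p ∈ A.offDiag, d p.1 p.2 * w p.1 * w p.2

lemma exists_sep_clustering
    {X : Type*} [Fintype X] [DecidableEq X]
    (k : ℕ) (hk1 : 1 < k) (hk2 : k < Fintype.card X)
    (S : Finset X) (hS2 : S.card ≤ k) :
    ∃ C : Finset (Finset X), IsClustering C k ∧
      ∀ x ∈ S, ∀ y ∈ S, x ≠ y → ¬ SameCluster C x y := by
  obtain ⟨T, hST, hTcard⟩ := Finset.exists_superset_card_eq hS2 hk2.le
  have hTne : T.Nonempty := by
    rw [← Finset.card_pos, hTcard]; omega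
  obtain ⟨t₀, ht₀⟩ := hTne
  set E := T.erase t₀ with hE
  set Big := (Finset.univ : Finset X) \ E with hBig
  have hEcard : E.card = k - 1 := by rw [hE, Finset.card_erase_of_mem ht₀, hTcard]
  have ht₀Big : t₀ ∈ Big := by
    simp [hBig, hE]
  have hBigNotSing : ∀ t ∈ E, Big ≠ {t} := by
    intro t ht h
    have : t ∈ Big := h ▸ Finset.mem_singleton_self t
    simp [hBig] at this
    exact this ht
  refine ⟨insert Big (E.image fun t => ({t} : Finset X)), ⟨?_, ?_, ?_, ?_⟩, ?_⟩
  · rw [Finset.card_insert_of_notMem, Finset.card_image_of_injective _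
      (fun a b h => Finset.singleton_injective h), hEcard]
    · omega
    · intro h
      obtain ⟨t, ht, h⟩ := Finset.mem_image.mp h
      exact hBigNotSing t ht h.symm
  · intro A hA
    rcases Finset.mem_insert.mp hA with h | h
    · exact h ▸ ⟨t₀, ht₀Big⟩
    · obtain ⟨t, _, h⟩ := Finset.mem_image.mp h
      exact h ▸ ⟨t, Finset.mem_singleton_self t⟩
  · intro A hA B hB hAB
    rcases Finset.mem_insert.mp hA with h | h <;>
      rcases Finset.mem_insert.mp hB with h' | h'
    · exact absurd (h.trans h'.symm) hAB
    · obtain ⟨t, ht, h'⟩ := Finset.mem_image.mp h'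
      subst h; subst h'
      simp only [Finset.disjoint_singleton_right, hBig, Finset.mem_sdiff]
      tauto
    · obtain ⟨t, ht, h⟩ := Finset.mem_image.mp h
      subst h'; subst h
      simp only [Finset.disjoint_singleton_left, hBig, Finset.mem_sdiff]
      tauto
    · obtain ⟨t, ht, h⟩ := Finset.mem_image.mp h
      obtain ⟨t', ht', h'⟩ := Finset.mem_image.mp h'
      subst h; subst h'
      simp only [Finset.disjoint_singleton_right, Finset.mem_singleton]
      intro hh; exact hAB (by rw [hh])
  · intro x
    by_cases hx : x ∈ E
    · exact ⟨{x}, Finset.mem_insert_of_mem (Finset.mem_image_of_mem _ hx),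
        Finset.mem_singleton_self x⟩
    · exact ⟨Big, Finset.mem_insert_self _ _, by simp [hBig, hx]⟩
  · intro x hx y hy hxy ⟨A, hA, hxA, hyA⟩
    rcases Finset.mem_insert.mp hA with h | h
    · subst h
      have hx' : x = t₀ := by
        by_contra h
        exact (Finset.mem_sdiff.mp hxA).2 (Finset.mem_erase.mpr ⟨h, hST hx⟩)
      have hy' : y = t₀ := by
        by_contra h
        exact (Finset.mem_sdiff.mp hyA).2 (Finset.mem_erase.mpr ⟨h, hST hy⟩)
      exact hxy (hx'.trans hy'.symm)
    · obtain ⟨t, _, h⟩ := Finset.mem_image.mp h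
      subst h
      rw [Finset.mem_singleton] at hxA hyA
      exact hxy (hxA.trans hyA.symm)

/-- the min-sum objective is weight-separable: for any `S ⊆ X` with
`2 ≤ |S| ≤ k` there is a weight function such that every k-clustering minimizing the
min-sum cost places all elements of `S` in pairwise distinct clusters. -/
theorem minSum_weight_separable
    {X : Type*} [Fintype X] [DecidableEq X]
    (d : X → X → ℝ) (hsym : ∀ x y, d x y = d y x) (hnn : ∀ x y, 0 ≤ d x y)
    (hzero : ∀ x y, d x y = 0 ↔ x = y)
    (k : ℕ) (hk1 : 1 < k) (hk2 : k < Fintype.card X)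
    (S : Finset X) (hS1 : 2 ≤ S.card) (hS2 : S.card ≤ k) :
    ∃ w : X → ℝ, IsWeight w ∧
      ∀ C : Finset (Finset X), IsClustering C k →
        (∀ C' : Finset (Finset X), IsClustering C' k →
          minSumCost C w d ≤ minSumCost C' w d) →
        ∀ x ∈ S, ∀ y ∈ S, x ≠ y → ¬ SameCluster C x y := by
  classical
  set n : ℝ := (Fintype.card X : ℝ) with hn
  set D : ℝ := ∑ p ∈ Finset.univ ×ˢ Finset.univ, d p.1 p.2 with hD
  have hdD : ∀ x y : X, d x y ≤ D := by
    intro x y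
    exact Finset.single_le_sum (f := fun p : X × X => d p.1 p.2)
      (fun p _ => hnn p.1 p.2) (a := (x, y)) (by simp)
  have hD0 : 0 ≤ D := Finset.sum_nonneg fun p _ => hnn p.1 p.2
  have hkn : (k : ℝ) ≤ n := by rw [hn]; exact_mod_cast hk2.le
  have hn0 : 0 ≤ n := by rw [hn]; positivity
  have hcardn : ∀ A : Finset X, (A.card : ℝ) ≤ n := by
    intro A; rw [hn]; exact_mod_cast Finset.card_le_univ A
  clear_value D
  clear hD
  clear_value n
  clear hn
  -- the minimum distance within S
  obtain ⟨x0, hx0, y0, hy0, hxy0⟩ := Finset.one_lt_card.mp (by omega : 1 < S.card)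
  have hne : (S.offDiag.image fun p => d p.1 p.2).Nonempty :=
    ⟨d x0 y0, Finset.mem_image.mpr ⟨(x0, y0), Finset.mem_offDiag.mpr ⟨hx0, hy0, hxy0⟩, rfl⟩⟩
  set δ : ℝ := (S.offDiag.image fun p => d p.1 p.2).min' hne with hδ
  have hδpos : 0 < δ := by
    obtain ⟨p, hp, hpd⟩ := Finset.mem_image.mp ((S.offDiag.image fun p => d p.1 p.2).min'_mem hne)
    have hp12 : p.1 ≠ p.2 := (Finset.mem_offDiag.mp hp).2.2
    rw [hδ, ← hpd]
    exact lt_of_le_of_ne (hnn p.1 p.2) fun h => hp12 ((hzero p.1 p.2).mp h.symm)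
  have hδle : ∀ x ∈ S, ∀ y ∈ S, x ≠ y → δ ≤ d x y := by
    intro x hx y hy hxy
    exact Finset.min'_le _ _ (Finset.mem_image.mpr ⟨(x, y), Finset.mem_offDiag.mpr ⟨hx, hy, hxy⟩, rfl⟩)
  clear_value δ
  clear hδ
  obtain ⟨M, hM⟩ : ∃ M : ℝ, M = 1 + n ^ 3 * D / (2 * δ) := ⟨_, rfl⟩
  have hM1 : 1 ≤ M := by
    have : 0 ≤ n ^ 3 * D / (2 * δ) := by positivity
    rw [hM]; linarith
  have hM0 : 0 < M := by linarith
  have hδM : δ * M = δ + n ^ 3 * D / 2 := by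
    rw [hM]; field_simp
  have key : (1 / 2) * n ^ 3 * D * M < δ * M ^ 2 := by
    nlinarith [mul_pos hδpos hM0]
  set w : X → ℝ := fun x => if x ∈ S then M else 1 with hw
  have hw1 : ∀ x, 1 ≤ w x := by
    intro x; simp only [hw]; split <;> simp [hM1]
  have hw0 : ∀ x, 0 ≤ w x := fun x => le_trans zero_le_one (hw1 x)
  have hwM : ∀ x, w x ≤ M := by
    intro x; simp only [hw]; split <;> simp [hM1]
  have hwS : ∀ x ∈ S, w x = M := by intro x hx; simp [hw, hx]
  refine ⟨w, fun x => lt_of_lt_of_le zero_lt_one (hw1 x), ?_⟩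
  -- upper bound on separating clusterings
  have hupper : ∀ C' : Finset (Finset X), IsClustering C' k →
      (∀ x ∈ S, ∀ y ∈ S, x ≠ y → ¬ SameCluster C' x y) →
      minSumCost C' w d ≤ (1 / 2) * n ^ 3 * D * M := by
    intro C' hC' hsep
    have hterm : ∀ A ∈ C', (1 / 2) * ∑ p ∈ A.offDiag, d p.1 p.2 * w p.1 * w p.2
        ≤ (1 / 2) * (n * n * (D * M)) := by
      intro A hA
      have hinner : ∀ p ∈ A.offDiag, d p.1 p.2 * w p.1 * w p.2 ≤ D * M := by
        intro p hp
        obtain ⟨hp1, hp2, hp12⟩ := Finset.mem_offDiag.mp hp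
        have hprod : w p.1 * w p.2 ≤ M := by
          by_cases h1 : p.1 ∈ S
          · have h2 : p.2 ∉ S := fun h2 => hsep p.1 h1 p.2 h2 hp12 ⟨A, hA, hp1, hp2⟩
            simp [hw, h1, h2]
          · calc w p.1 * w p.2 = w p.2 := by simp [hw, h1]
              _ ≤ M := hwM p.2
        calc d p.1 p.2 * w p.1 * w p.2 = d p.1 p.2 * (w p.1 * w p.2) := by ring
          _ ≤ D * M := mul_le_mul (hdD p.1 p.2) hprod
              (mul_nonneg (hw0 p.1) (hw0 p.2)) hD0
      have hcard : (A.offDiag.card : ℝ) ≤ n * n := by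
        have hAn : (A.card : ℝ) ≤ n := hcardn A
        have h1 : ((A.offDiag.card : ℕ) : ℝ) ≤ (A.card : ℝ) * A.card := by
          rw [Finset.offDiag_card]
          calc ((A.card * A.card - A.card : ℕ) : ℝ)
              ≤ ((A.card * A.card : ℕ) : ℝ) := Nat.cast_le.mpr (Nat.sub_le _ _)
            _ = (A.card : ℝ) * A.card := by push_cast; ring
        have hA0 : (0 : ℝ) ≤ A.card := Nat.cast_nonneg _
        nlinarith [mul_le_mul hAn hAn hA0 hn0]
      have hsum : ∑ p ∈ A.offDiag, d p.1 p.2 * w p.1 * w p.2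
          ≤ A.offDiag.card • (D * M) := Finset.sum_le_card_nsmul _ _ _ hinner
      rw [nsmul_eq_mul] at hsum
      have hDM : 0 ≤ D * M := mul_nonneg hD0 hM0.le
      nlinarith [mul_le_mul_of_nonneg_right hcard hDM]
    have hcount : minSumCost C' w d ≤ C'.card • ((1 / 2) * (n * n * (D * M))) :=
      Finset.sum_le_card_nsmul _ _ _ hterm
    rw [nsmul_eq_mul, hC'.1] at hcount
    have hb : 0 ≤ (1 / 2) * (n * n * (D * M)) := by positivity
    calc minSumCost C' w d ≤ (k : ℝ) * ((1 / 2) * (n * n * (D * M))) := hcount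
      _ ≤ n * ((1 / 2) * (n * n * (D * M))) := mul_le_mul_of_nonneg_right hkn hb
      _ = (1 / 2) * n ^ 3 * D * M := by ring
  -- lower bound on non-separating clusterings
  have hlower : ∀ C : Finset (Finset X), IsClustering C k →
      ∀ x ∈ S, ∀ y ∈ S, x ≠ y → SameCluster C x y →
      δ * M ^ 2 ≤ minSumCost C w d := by
    intro C hC x hx y hy hxy ⟨A, hA, hxA, hyA⟩
    have hnonneg : ∀ B ∈ C, 0 ≤ (1 / 2) * ∑ p ∈ B.offDiag, d p.1 p.2 * w p.1 * w p.2 := by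
      intro B _
      have : 0 ≤ ∑ p ∈ B.offDiag, d p.1 p.2 * w p.1 * w p.2 :=
        Finset.sum_nonneg fun p _ =>
          mul_nonneg (mul_nonneg (hnn p.1 p.2) (hw0 p.1)) (hw0 p.2)
      linarith
    have hAle : (1 / 2) * ∑ p ∈ A.offDiag, d p.1 p.2 * w p.1 * w p.2 ≤ minSumCost C w d :=
      Finset.single_le_sum hnonneg hA
    have hpairsub : ({(x, y), (y, x)} : Finset (X × X)) ⊆ A.offDiag := by
      intro p hp
      rcases Finset.mem_insert.mp hp with h | h
      · subst h; exact Finset.mem_offDiag.mpr ⟨hxA, hyA, hxy⟩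
      · rw [Finset.mem_singleton] at h; subst h
        exact Finset.mem_offDiag.mpr ⟨hyA, hxA, hxy.symm⟩
    have hpairsum : ∑ p ∈ ({(x, y), (y, x)} : Finset (X × X)), d p.1 p.2 * w p.1 * w p.2
        ≤ ∑ p ∈ A.offDiag, d p.1 p.2 * w p.1 * w p.2 :=
      Finset.sum_le_sum_of_subset_of_nonneg hpairsub fun p _ _ =>
        mul_nonneg (mul_nonneg (hnn p.1 p.2) (hw0 p.1)) (hw0 p.2)
    have hpairval : ∑ p ∈ ({(x, y), (y, x)} : Finset (X × X)), d p.1 p.2 * w p.1 * w p.2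
        = 2 * (d x y * M ^ 2) := by
      rw [Finset.sum_pair (by simp [hxy] : ((x, y) : X × X) ≠ (y, x))]
      simp only [hwS x hx, hwS y hy, hsym y x]
      ring
    have hdxy : δ ≤ d x y := hδle x hx y hy hxy
    have hM2 : 0 ≤ M ^ 2 := sq_nonneg M
    nlinarith [mul_le_mul_of_nonneg_right hdxy hM2]
  -- combine
  obtain ⟨Csep, hCsep, hCsepSep⟩ := exists_sep_clustering k hk1 hk2 S hS2
  intro C hC hopt x hx y hy hxy hsame
  have h1 : δ * M ^ 2 ≤ minSumCost C w d := hlower C hC x hx y hy hxy hsame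
  have h2 : minSumCost C w d ≤ minSumCost Csep w d := hopt Csep hCsep
  have h3 : minSumCost Csep w d ≤ (1 / 2) * n ^ 3 * D * M := hupper Csep hCsep hCsepSep
  linarith
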